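/- Let Z_1,…,Z_l ∈ ℂ*, and let X_i : V_{i+1} → V_i, D_i : V_i → V_{i+1} (indices mod l) be linear maps on N-dimensional spaces satisfying Z_i(1 + X_iD_i) = Z_{i−1}(1 + D_{i−1}X_{i−1}) for 2 ≤ i ≤ l. Set X = X_1⋯X_l, Y = Z_1(1 + X_1D_1). Then for every 0 ≤ r ≤ l: Z_1⋯Z_r X_1⋯X_r D_r⋯D_1 = (Y − Z_1)(Y − Z_2)⋯(Y − Z_r) as endomorphisms of V_1. In particular Z_1⋯Z_l·XD = (Y − Z_1)⋯(Y − Z_l) where D = D_l⋯D_1. -/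

import Mathlib

/- STATEMENT 16: Let Z_1,…,Z_l ∈ ℂ*, and X_i : V_{i+1} → V_i, D_i : V_i → V_{i+1}
(N-dimensional spaces, realized as N×N matrices) satisfy the multiplicative
preprojective relations Z_i(1 + X_i D_i) = Z_{i−1}(1 + D_{i−1} X_{i−1}) for 2 ≤ i ≤ l.
With Y = Z_1(1 + X_1 D_1), for every 0 ≤ r ≤ l:
Z_1⋯Z_r · X_1⋯X_r D_r⋯D_1 = (Y − Z_1)⋯(Y − Z_r). -/

theorem statement16 (N l : ℕ) (Z : ℕ → ℂ) (hZ : ∀ i, 1 ≤ i → i ≤ l → Z i ≠ 0)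
    (Xm Dm : ℕ → Matrix (Fin N) (Fin N) ℂ)
    (hrel : ∀ i, 2 ≤ i → i ≤ l →
      Z i • ((1 : Matrix (Fin N) (Fin N) ℂ) + Xm i * Dm i)
        = Z (i - 1) • ((1 : Matrix (Fin N) (Fin N) ℂ) + Dm (i - 1) * Xm (i - 1))) :
    ∀ r, r ≤ l →
      (((List.range r).map (fun i => Z (i + 1))).prod) •
        ((((List.range r).map (fun i => Xm (i + 1))).prod) *
          (((List.range r).reverse.map (fun i => Dm (i + 1))).prod))
      = (((List.range r).map (fun i =>
          (Z 1 • ((1 : Matrix (Fin N) (Fin N) ℂ) + Xm 1 * Dm 1)) - Z (i + 1) • 1)).prod) := by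
  set Y : Matrix (Fin N) (Fin N) ℂ := Z 1 • (1 + Xm 1 * Dm 1) with hY
  have aux : ∀ k, k + 1 ≤ l →
      (((List.range k).map (fun i => Xm (i+1))).prod) * (Z (k+1) • (1 + Xm (k+1) * Dm (k+1)))
        = Y * (((List.range k).map (fun i => Xm (i+1))).prod) := by
    intro k
    induction k with
    | zero => intro _; simp [hY]
    | succ m ih =>
      intro hk
      have hr1 := hrel (m+2) (by omega) (by omega)
      have hm1 : m + 2 - 1 = m + 1 := by omega
      rw [hm1] at hr1
      rw [List.range_succ, List.map_append, List.prod_append]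
      simp only [List.map_cons, List.map_nil, List.prod_cons, List.prod_nil, mul_one]
      rw [mul_assoc]
      have e2 : m + 1 + 1 = m + 2 := rfl
      rw [e2, hr1]
      have key : Xm (m+1) * (Z (m+1) • (1 + Dm (m+1) * Xm (m+1)))
          = (Z (m+1) • (1 + Xm (m+1) * Dm (m+1))) * Xm (m+1) := by
        rw [mul_smul_comm, smul_mul_assoc]
        congr 1
        rw [mul_add, add_mul, mul_one, one_mul, mul_assoc]
      rw [key, ← mul_assoc, ih (by omega), mul_assoc]
  have hcomm : ∀ a b : ℂ, Commute (Y - a • (1 : Matrix (Fin N) (Fin N) ℂ))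
      (Y - b • (1 : Matrix (Fin N) (Fin N) ℂ)) := by
    intro a b
    have h1 : Commute Y (b • (1 : Matrix (Fin N) (Fin N) ℂ)) :=
      (Commute.one_right Y).smul_right b
    have h2 : Commute (a • (1 : Matrix (Fin N) (Fin N) ℂ)) Y :=
      (Commute.one_left Y).smul_left a
    have h3 : Commute (a • (1 : Matrix (Fin N) (Fin N) ℂ))
        (b • (1 : Matrix (Fin N) (Fin N) ℂ)) :=
      ((Commute.refl (1 : Matrix (Fin N) (Fin N) ℂ)).smul_left a).smul_right b
    exact (((Commute.refl Y).sub_right h1).sub_left (h2.sub_right h3))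
  intro r hr
  induction r with
  | zero => simp
  | succ n ih =>
    have IH := ih (by omega)
    rw [List.range_succ]
    simp only [List.map_append, List.prod_append, List.reverse_append, List.map_cons,
      List.map_nil, List.prod_cons, List.prod_nil, mul_one, List.reverse_cons,
      List.reverse_nil, List.nil_append, List.cons_append]
    set Xp := ((List.range n).map (fun i => Xm (i+1))).prod with hXp
    set Dp := ((List.range n).reverse.map (fun i => Dm (i+1))).prod with hDp
    set Zp := ((List.range n).map (fun i => Z (i+1))).prod with hZp
    have key : Xp * (Z (n+1) • (Xm (n+1) * Dm (n+1)))
        = (Y - Z (n+1) • 1) * Xp := by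
      have h1 := aux n hr
      have expand : Z (n+1) • ((1 : Matrix (Fin N) (Fin N) ℂ) + Xm (n+1) * Dm (n+1))
          = Z (n+1) • (1 : Matrix (Fin N) (Fin N) ℂ) + Z (n+1) • (Xm (n+1) * Dm (n+1)) := by
        rw [smul_add]
      rw [expand, mul_add] at h1
      have := sub_eq_of_eq_add' h1.symm
      rw [sub_mul]
      rw [← this]
      rw [mul_smul_comm, mul_one]
      simp [smul_mul_assoc]
      rfl
    calc (Zp * Z (n+1)) • (Xp * Xm (n+1) * (Dm (n+1) * Dp))
        = Zp • (Z (n+1) • (Xp * (Xm (n+1) * Dm (n+1)) * Dp)) := by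
          rw [mul_smul]; ring_nf; rw [mul_assoc, mul_assoc, mul_assoc]
      _ = Zp • ((Xp * (Z (n+1) • (Xm (n+1) * Dm (n+1)))) * Dp) := by
          rw [mul_smul_comm, smul_mul_assoc]
      _ = Zp • ((Y - Z (n+1) • 1) * Xp * Dp) := by rw [key]
      _ = (Y - Z (n+1) • 1) * (Zp • (Xp * Dp)) := by
          rw [mul_assoc, mul_smul_comm]
      _ = (Y - Z (n+1) • 1) *
          (((List.range n).map (fun i => Y - Z (i + 1) • 1)).prod) := by rw [IH]
      _ = (((List.range n).map (fun i => Y - Z (i + 1) • 1)).prod) *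
          (Y - Z (n+1) • 1) := by
          refine (Commute.list_prod_right _ _ ?_).eq
          intro x hx
          rcases List.mem_map.mp hx with ⟨i, _, rfl⟩
          exact hcomm (Z (n+1)) (Z (i+1))
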